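/- arXiv:1207.2406 — 2 statements merged into one kernel-verified Lean document; each statement's English description precedes it below -/
import Mathlib

section
/- For p ≥ p* > 0, the quantity p·log(p/p*) + p* − p is at least 2(√p − √p*)². -/
open Real

lemma key_ineq (t : ℝ) (ht : 1 ≤ t) : 3*t^2 - 4*t + 1 ≤ 2*t^2*Real.log t := by
  set f : ℝ → ℝ := fun x => 2*x^2*Real.log x - (3*x^2 - 4*x + 1) with hf
  have hmono : MonotoneOn f (Set.Ici 1) := by
    apply monotoneOn_of_deriv_nonneg (convex_Ici 1)
    · apply ContinuousOn.sub
      · apply ContinuousOn.mul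
        · fun_prop
        · exact Real.continuousOn_log.mono (by intro x hx; simp at hx ⊢; linarith [hx])
      · fun_prop
    · intro x hx
      rw [interior_Ici] at hx
      have hx0 : (0:ℝ) < x := by exact lt_trans one_pos hx
      have h1 : HasDerivAt f (2*(2*x)*Real.log x + 2*x^2*x⁻¹ - (3*(2*x) - 4)) x := by
        have hl : HasDerivAt Real.log x⁻¹ x := Real.hasDerivAt_log (ne_of_gt hx0)
        have hp : HasDerivAt (fun y : ℝ => 2*y^2) (2*(2*x)) x := by
          simpa using ((hasDerivAt_pow 2 x).const_mul 2)
        have hq : HasDerivAt (fun y : ℝ => 3*y^2 - 4*y + 1) (3*(2*x) - 4) x := by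
          have := (((hasDerivAt_pow 2 x).const_mul 3).sub ((hasDerivAt_id x).const_mul 4)).add_const 1
          simpa using this
        exact (hp.mul hl).sub hq
      exact h1.differentiableAt.differentiableWithinAt
    · intro x hx
      rw [interior_Ici] at hx
      have hx0 : (0:ℝ) < x := lt_trans one_pos hx
      have h1 : HasDerivAt f (2*(2*x)*Real.log x + 2*x^2*x⁻¹ - (3*(2*x) - 4)) x := by
        have hl : HasDerivAt Real.log x⁻¹ x := Real.hasDerivAt_log (ne_of_gt hx0)
        have hp : HasDerivAt (fun y : ℝ => 2*y^2) (2*(2*x)) x := by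
          simpa using ((hasDerivAt_pow 2 x).const_mul 2)
        have hq : HasDerivAt (fun y : ℝ => 3*y^2 - 4*y + 1) (3*(2*x) - 4) x := by
          have := (((hasDerivAt_pow 2 x).const_mul 3).sub ((hasDerivAt_id x).const_mul 4)).add_const 1
          simpa using this
        exact (hp.mul hl).sub hq
      rw [h1.deriv]
      have hlog : 1 - x⁻¹ ≤ Real.log x := Real.one_sub_inv_le_log_of_pos hx0
      have hxinv : x * x⁻¹ = 1 := mul_inv_cancel₀ (ne_of_gt hx0)
      have : x - 1 ≤ x * Real.log x := by
        calc x - 1 = x * (1 - x⁻¹) := by field_simp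
        _ ≤ x * Real.log x := by
          apply mul_le_mul_of_nonneg_left hlog (le_of_lt hx0)
      nlinarith [this, sq_nonneg x]
  have := hmono (Set.self_mem_Ici) (Set.mem_Ici.mpr ht) ht
  simp [hf, Real.log_one] at this
  linarith

theorem poisson_relent_ge_hellinger (p pstar : ℝ) (h0 : 0 < pstar) (h1 : pstar ≤ p) :
    2 * (Real.sqrt p - Real.sqrt pstar) ^ 2 ≤ p * log (p / pstar) + pstar - p := by
  set a := Real.sqrt p with ha
  set b := Real.sqrt pstar with hb
  have hb0 : 0 < b := Real.sqrt_pos.mpr h0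
  have hab : b ≤ a := Real.sqrt_le_sqrt h1
  have ha0 : 0 < a := lt_of_lt_of_le hb0 hab
  have hpa : p = a^2 := (Real.sq_sqrt (le_trans h0.le h1)).symm
  have hpb : pstar = b^2 := (Real.sq_sqrt h0.le).symm
  have ht : 1 ≤ a / b := (one_le_div hb0).mpr hab
  have hk := key_ineq (a/b) ht
  have hlog : Real.log (a^2 / b^2) = 2 * Real.log (a/b) := by
    rw [← div_pow, Real.log_pow]
    push_cast; ring
  rw [hpa, hpb, hlog]
  have hb2 : (0:ℝ) < b^2 := by positivity
  have hk2 : (3*(a/b)^2 - 4*(a/b) + 1) * b^2 ≤ (2*(a/b)^2*Real.log (a/b)) * b^2 :=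
    mul_le_mul_of_nonneg_right hk hb2.le
  have e1 : (3*(a/b)^2 - 4*(a/b) + 1) * b^2 = 3*a^2 - 4*a*b + b^2 := by
    field_simp
  have e2 : (2*(a/b)^2*Real.log (a/b)) * b^2 = 2*a^2*Real.log (a/b) := by
    field_simp
  rw [e1, e2] at hk2
  nlinarith [hk2]
end

section
/- Let W_1,…,W_N be independent Bernoulli random variables with success probabilities r_1,…,r_N, and let α_1,…,α_N be nonnegative weights summing to 1. Set N_α = 1/max_j α_j, r̂ = Σ_j α_j W_j, and r* = Σ_j α_j r_j. Then for any 0 < r < r*, P(r̂ < r) ≤ exp(−N_α · D(r‖r*)), where D(r‖r*) is the relative entropy between Bernoulli(r) and Bernoulli(r*). -/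
open MeasureTheory ProbabilityTheory

set_option maxHeartbeats 1000000 in
theorem weighted_bernoulli_lower_tail
    {Ω : Type*} [MeasurableSpace Ω] (μ : Measure Ω) [IsProbabilityMeasure μ]
    (N : ℕ) (hN : 0 < N) (W : Fin N → Ω → ℝ) (r α : Fin N → ℝ)
    (hmeas : ∀ j, Measurable (W j))
    (hindep : iIndepFun W μ)
    (hber : ∀ j ω, W j ω = 0 ∨ W j ω = 1)
    (hr : ∀ j, μ {ω | W j ω = 1} = ENNReal.ofReal (r j))
    (hα0 : ∀ j, 0 ≤ α j) (hα1 : ∑ j, α j = 1)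
    (rv rstar : ℝ) (hrstar : rstar = ∑ j, α j * r j)
    (hpos : 0 < rv) (hlt : rv < rstar) :
    μ {ω | ∑ j, α j * W j ω < rv} ≤
      ENNReal.ofReal (Real.exp (-(1 / ⨆ j, α j) *
        (rv * Real.log (rv / rstar) +
          (1 - rv) * Real.log ((1 - rv) / (1 - rstar))))) := by
  set αm := ⨆ j, α j with hαm_def
  -- basic facts about αm
  have hbdd : BddAbove (Set.range α) := (Set.finite_range α).bddAbove
  have hle : ∀ j, α j ≤ αm := fun j => le_ciSup hbdd j
  have hαm_pos : 0 < αm := by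
    by_contra h
    push_neg at h
    have : ∑ j, α j ≤ 0 := Finset.sum_nonpos fun j _ => (hle j).trans h
    linarith [hα1]
  -- the success probability sets
  set S : Fin N → Set Ω := fun j => {ω | W j ω = 1} with hS_def
  have hS : ∀ j, MeasurableSet (S j) := fun j =>
    (hmeas j) (measurableSet_singleton 1)
  set p : Fin N → ℝ := fun j => (μ (S j)).toReal with hp_def
  have hp0 : ∀ j, 0 ≤ p j := fun j => ENNReal.toReal_nonneg
  have hp1 : ∀ j, p j ≤ 1 := by
    intro j
    have h1 : μ (S j) ≤ 1 := prob_le_one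
    have := ENNReal.toReal_mono ENNReal.one_ne_top h1
    simpa using this
  have hrp : ∀ j, r j ≤ p j := by
    intro j
    have : p j = max (r j) 0 := by
      rw [hp_def]; simp only; rw [hr j, ENNReal.toReal_ofReal']
    rw [this]; exact le_max_left _ _
  have hr1 : ∀ j, r j ≤ 1 := fun j => (hrp j).trans (hp1 j)
  have hrs1 : rstar ≤ 1 := by
    rw [hrstar]
    calc ∑ j, α j * r j ≤ ∑ j, α j * 1 :=
          Finset.sum_le_sum fun j _ => mul_le_mul_of_nonneg_left (hr1 j) (hα0 j)
      _ = 1 := by simpa using hα1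
  have hrstar_pos : 0 < rstar := hpos.trans hlt
  rcases eq_or_lt_of_le hrs1 with heq | hrs
  · -- degenerate case rstar = 1: the bound is ≥ 1
    subst heq
    have hrv1 : rv < 1 := hlt
    simp only [sub_self, div_zero, Real.log_zero, mul_zero, add_zero, div_one]
    have hlog : Real.log rv ≤ 0 := Real.log_nonpos hpos.le hrv1.le
    have hx : rv * Real.log rv ≤ 0 := mul_nonpos_of_nonneg_of_nonpos hpos.le hlog
    have hexp : (0:ℝ) ≤ -(1 / αm) * (rv * Real.log rv) := by
      have h1 : (0:ℝ) < 1 / αm := by positivity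
      nlinarith
    calc μ {ω | ∑ j, α j * W j ω < rv} ≤ 1 := prob_le_one
      _ ≤ ENNReal.ofReal (Real.exp (-(1 / αm) * (rv * Real.log rv))) := by
          rw [← ENNReal.ofReal_one]
          exact ENNReal.ofReal_le_ofReal (Real.one_le_exp hexp)
  -- main case : rstar < 1
  have hrv1 : rv < 1 := hlt.trans hrs
  set q : ℝ := rv * (1 - rstar) / (rstar * (1 - rv)) with hq_def
  have hq0 : 0 < q := by
    apply div_pos <;> nlinarith
  have hq1 : q < 1 := by
    rw [div_lt_one (by nlinarith)]
    nlinarith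
  have hlogq : Real.log q < 0 := Real.log_neg hq0 hq1
  set t : ℝ := Real.log q / αm with ht_def
  have ht : t ≤ 0 := div_nonpos_of_nonpos_of_nonneg hlogq.le hαm_pos.le
  set X : Ω → ℝ := fun ω => ∑ j, α j * W j ω with hX_def
  have hW01 : ∀ j ω, 0 ≤ W j ω ∧ W j ω ≤ 1 := by
    intro j ω; rcases hber j ω with h | h <;> rw [h] <;> norm_num
  have hX0 : ∀ ω, 0 ≤ X ω :=
    fun ω => Finset.sum_nonneg fun j _ => mul_nonneg (hα0 j) (hW01 j ω).1
  have hXmeas : Measurable X :=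
    Finset.measurable_sum _ fun j _ => (hmeas j).const_mul (α j)
  -- integrability of the exponential moment
  have h_int : Integrable (fun ω => Real.exp (t * X ω)) μ := by
    refine Integrable.mono' (integrable_const (1:ℝ))
      ((hXmeas.const_mul t).exp).aestronglyMeasurable ?_
    filter_upwards with ω
    rw [Real.norm_eq_abs, abs_of_pos (Real.exp_pos _)]
    exact Real.exp_le_one_iff.mpr (mul_nonpos_of_nonpos_of_nonneg ht (hX0 ω))
  -- Chernoff bound
  have hch := measure_le_le_exp_mul_mgf (μ := μ) (X := X) rv ht h_int
  -- independence of the scaled variables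
  have hYindep : iIndepFun
      (fun j => (fun x => α j * x) ∘ W j) μ :=
    hindep.comp _ fun j => measurable_const_mul (α j)
  have hYmeas : ∀ j, Measurable ((fun x => α j * x) ∘ W j) :=
    fun j => (hmeas j).const_mul (α j)
  have hXsum : X = ∑ j, (fun x => α j * x) ∘ W j := by
    funext ω; simp [hX_def, Finset.sum_apply, Function.comp]
  have hmgf_sum : mgf X μ t = ∏ j, mgf ((fun x => α j * x) ∘ W j) μ t := by
    rw [hXsum]; exact hYindep.mgf_sum hYmeas Finset.univ
  -- computation of each individual mgf
  have hWint : ∀ j, Integrable (W j) μ := by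
    intro j
    have hWind : W j = (S j).indicator fun _ => (1:ℝ) := by
      funext ω
      rcases hber j ω with h | h
      · have hnot : ω ∉ S j := by simp [hS_def, h]
        rw [h, Set.indicator_of_notMem hnot]
      · have hin : ω ∈ S j := by simp [hS_def, h]
        rw [h, Set.indicator_of_mem hin]
    rw [hWind]
    exact (integrable_const (1:ℝ)).indicator (hS j)
  have hintW : ∀ j, ∫ ω, W j ω ∂μ = p j := by
    intro j
    have hWind : ∀ ω, W j ω = (S j).indicator (fun _ => (1:ℝ)) ω := by
      intro ω
      rcases hber j ω with h | h
      · have hnot : ω ∉ S j := by simp [hS_def, h]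
        rw [h, Set.indicator_of_notMem hnot]
      · have hin : ω ∈ S j := by simp [hS_def, h]
        rw [h, Set.indicator_of_mem hin]
    calc ∫ ω, W j ω ∂μ = ∫ ω, (S j).indicator (fun _ => (1:ℝ)) ω ∂μ := by
          exact integral_congr_ae (Filter.Eventually.of_forall hWind)
      _ = (μ (S j)).toReal • (1:ℝ) := integral_indicator_const (1:ℝ) (hS j)
      _ = p j := by rw [hp_def]; simp
  have hmgf_j : ∀ j, mgf ((fun x => α j * x) ∘ W j) μ t
      = 1 + p j * (Real.exp (t * α j) - 1) := by
    intro j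
    have heq : ∀ ω, Real.exp (t * ((fun x => α j * x) ∘ W j) ω)
        = 1 + (Real.exp (t * α j) - 1) * W j ω := by
      intro ω
      rcases hber j ω with h | h
      · simp [Function.comp, h]
      · simp [Function.comp, h]
    calc mgf ((fun x => α j * x) ∘ W j) μ t
        = ∫ ω, Real.exp (t * ((fun x => α j * x) ∘ W j) ω) ∂μ := rfl
      _ = ∫ ω, (1 + (Real.exp (t * α j) - 1) * W j ω) ∂μ :=
           integral_congr_ae (Filter.Eventually.of_forall heq)
      _ = (∫ _, (1:ℝ) ∂μ) + ∫ ω, (Real.exp (t * α j) - 1) * W j ω ∂μ :=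
           integral_add (integrable_const 1) ((hWint j).const_mul _)
      _ = 1 + (Real.exp (t * α j) - 1) * p j := by
           rw [integral_const, integral_const_mul, hintW j]; simp
      _ = 1 + p j * (Real.exp (t * α j) - 1) := by ring
  -- key pointwise bound via concavity of rpow
  set z : Fin N → ℝ := fun j => 1 + p j * (q - 1) with hz_def
  have hz0 : ∀ j, 0 < z j := by
    intro j
    have := hp1 j
    have := hp0 j
    have : 1 + p j * (q - 1) ≥ 1 + 1 * (q - 1) := by nlinarith
    simp only [hz_def]; nlinarith
  have hstepA : ∀ j, 1 + p j * (Real.exp (t * α j) - 1) ≤ z j ^ (α j / αm) := by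
    intro j
    set θ : ℝ := α j / αm with hθ_def
    have hθ0 : 0 ≤ θ := div_nonneg (hα0 j) hαm_pos.le
    have hθ1 : θ ≤ 1 := (div_le_one hαm_pos).mpr (hle j)
    have hexpθ : Real.exp (t * α j) = q ^ θ := by
      rw [Real.rpow_def_of_pos hq0, ht_def, hθ_def]
      congr 1
      ring
    have hconc := (Real.concaveOn_rpow hθ0 hθ1).2 (Set.mem_Ici.mpr zero_le_one)
      (Set.mem_Ici.mpr hq0.le)
      (by linarith [hp1 j] : 0 ≤ 1 - p j) (hp0 j) (by ring)
    simp only [smul_eq_mul, Real.one_rpow] at hconc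
    have h1 : (1 - p j) * 1 + p j * q ^ θ ≤ ((1 - p j) * 1 + p j * q) ^ θ := hconc
    have h2 : (1 - p j) * 1 + p j * q = z j := by rw [hz_def]; ring
    rw [h2] at h1
    rw [hexpθ]
    calc 1 + p j * (q ^ θ - 1) = (1 - p j) * 1 + p j * q ^ θ := by ring
      _ ≤ z j ^ θ := h1
  -- combine: product bound
  have hprod : mgf X μ t ≤ ((1 - rstar) / (1 - rv)) ^ (1 / αm) := by
    rw [hmgf_sum]
    have h1 : ∏ j, mgf ((fun x => α j * x) ∘ W j) μ t ≤ ∏ j, z j ^ (α j / αm) := by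
      apply Finset.prod_le_prod
      · intro j _; exact mgf_nonneg
      · intro j _; rw [hmgf_j j]; exact hstepA j
    have h2 : ∏ j, z j ^ (α j / αm) = (∏ j, z j ^ α j) ^ (1 / αm) := by
      rw [← Real.finset_prod_rpow _ _ (fun j _ => Real.rpow_nonneg (hz0 j).le _) _]
      apply Finset.prod_congr rfl
      intro j _
      rw [← Real.rpow_mul (hz0 j).le]
      congr 1
      ring
    have h3 : ∏ j, z j ^ α j ≤ ∑ j, α j * z j :=
      Real.geom_mean_le_arith_mean_weighted Finset.univ α z
        (fun j _ => hα0 j) hα1 (fun j _ => (hz0 j).le)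
    have h4 : ∑ j, α j * z j = 1 + (q - 1) * ∑ j, α j * p j := by
      have hterm : ∀ j, α j * z j = α j + (q - 1) * (α j * p j) := by
        intro j; simp only [hz_def]; ring
      calc ∑ j, α j * z j = ∑ j, (α j + (q - 1) * (α j * p j)) :=
            Finset.sum_congr rfl fun j _ => hterm j
        _ = (∑ j, α j) + ∑ j, (q - 1) * (α j * p j) := Finset.sum_add_distrib
        _ = 1 + (q - 1) * ∑ j, α j * p j := by rw [hα1, ← Finset.mul_sum]
    have h5 : rstar ≤ ∑ j, α j * p j := by
      rw [hrstar]
      exact Finset.sum_le_sum fun j _ => mul_le_mul_of_nonneg_left (hrp j) (hα0 j)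
    have h6 : ∑ j, α j * z j ≤ 1 + (q - 1) * rstar := by
      rw [h4]
      have hq1' : q - 1 ≤ 0 := by linarith
      nlinarith
    have h7 : 1 + (q - 1) * rstar = (1 - rstar) / (1 - rv) := by
      have h1v : (1:ℝ) - rv ≠ 0 := ne_of_gt (by linarith)
      have hrs0 : rstar ≠ 0 := ne_of_gt hrstar_pos
      rw [hq_def]
      field_simp
      ring
    calc ∏ j, mgf ((fun x => α j * x) ∘ W j) μ t
        ≤ (∏ j, z j ^ α j) ^ (1 / αm) := by rw [← h2]; exact h1
      _ ≤ ((1 - rstar) / (1 - rv)) ^ (1 / αm) := by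
          apply Real.rpow_le_rpow (Finset.prod_nonneg fun j _ =>
            Real.rpow_nonneg (hz0 j).le _) (by linarith [h3, h6, h7]) (by positivity)
  -- final exponent computation
  have hfinal : Real.exp (-t * rv) * ((1 - rstar) / (1 - rv)) ^ (1 / αm)
      = Real.exp (-(1 / αm) * (rv * Real.log (rv / rstar) +
          (1 - rv) * Real.log ((1 - rv) / (1 - rstar)))) := by
    rw [Real.rpow_def_of_pos (div_pos (by linarith) (by linarith)), ← Real.exp_add]
    congr 1
    have e1 : Real.log q = Real.log rv + Real.log (1 - rstar)
        - (Real.log rstar + Real.log (1 - rv)) := by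
      rw [hq_def, Real.log_div (ne_of_gt (by nlinarith)) (ne_of_gt (by nlinarith)),
        Real.log_mul (ne_of_gt hpos) (ne_of_gt (by linarith)),
        Real.log_mul (ne_of_gt hrstar_pos) (ne_of_gt (by linarith))]
    have e2 : Real.log ((1 - rstar) / (1 - rv))
        = Real.log (1 - rstar) - Real.log (1 - rv) :=
      Real.log_div (ne_of_gt (by linarith)) (ne_of_gt (by linarith))
    have e3 : Real.log (rv / rstar) = Real.log rv - Real.log rstar :=
      Real.log_div (ne_of_gt hpos) (ne_of_gt hrstar_pos)
    have e4 : Real.log ((1 - rv) / (1 - rstar))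
        = Real.log (1 - rv) - Real.log (1 - rstar) :=
      Real.log_div (ne_of_gt (by linarith)) (ne_of_gt (by linarith))
    have hαm0 : αm ≠ 0 := ne_of_gt hαm_pos
    rw [ht_def, e1, e2, e3, e4]
    field_simp
    ring
  -- put everything together
  have hsub : {ω | X ω < rv} ⊆ {ω | X ω ≤ rv} :=
    Set.setOf_subset_setOf.mpr fun ω hω => le_of_lt hω
  calc μ {ω | ∑ j, α j * W j ω < rv} = μ {ω | X ω < rv} := rfl
    _ ≤ μ {ω | X ω ≤ rv} := measure_mono hsub
    _ ≤ ENNReal.ofReal (Real.exp (-t * rv) * mgf X μ t) := by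
        rw [ENNReal.le_ofReal_iff_toReal_le (measure_ne_top μ _)
          (mul_nonneg (Real.exp_pos _).le mgf_nonneg)]
        exact hch
    _ ≤ ENNReal.ofReal (Real.exp (-(1 / αm) * (rv * Real.log (rv / rstar) +
          (1 - rv) * Real.log ((1 - rv) / (1 - rstar))))) := by
        apply ENNReal.ofReal_le_ofReal
        rw [← hfinal]
        exact mul_le_mul_of_nonneg_left hprod (Real.exp_pos _).le
end
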